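/- Symmetrization/contraction bound for the expected supremum: Let X_T = sup_{Δ ∈ 𝒟_δ(2k,2a,2T)} ‖𝒳(Δ)‖₂. Then (E X_T)² ≤ 16·a·√(2k)·T·E‖Σ_R‖ + p·δ², where Σ_R = Σ_{(i,j)} B_ij ε′_ij e_i(m1)e_j(m2)^T with ε′_ij an i.i.d. Rademacher sequence independent of the B_ij, and ‖Σ_R‖ is its operator norm. -/

import Mathlib

open MeasureTheory ProbabilityTheory

/-- Squared Frobenius norm of a real matrix. -/
noncomputable def frob2 {m1 m2 : ℕ} (A : Matrix (Fin m1) (Fin m2) ℝ) : ℝ :=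
  ∑ i, ∑ j, (A i j) ^ 2

/-- Frobenius norm of a real matrix. -/
noncomputable def frob {m1 m2 : ℕ} (A : Matrix (Fin m1) (Fin m2) ℝ) : ℝ :=
  Real.sqrt (frob2 A)

/-- Nuclear (trace) norm of a real matrix: sum of its singular values. -/
noncomputable def nucNorm {m1 m2 : ℕ} (A : Matrix (Fin m1) (Fin m2) ℝ) : ℝ :=
  ∑ i, Real.sqrt ((show (A.transpose * A).IsHermitian by
    simpa [Matrix.conjTranspose_eq_transpose_of_trivial] using
      Matrix.isHermitian_conjTranspose_mul_self A).eigenvalues i)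

/-- Operator (spectral) norm of a real matrix. -/
noncomputable def opNorm {m1 m2 : ℕ} (A : Matrix (Fin m1) (Fin m2) ℝ) : ℝ :=
  ⨆ v : {v : Fin m2 → ℝ // ∑ j, (v j) ^ 2 ≤ 1}, Real.sqrt (∑ i, (A.mulVec v.1 i) ^ 2)

/-- Matrix scalar product ⟨A,B⟩ = tr(AᵀB). -/
noncomputable def mdot {m1 m2 : ℕ} (A B : Matrix (Fin m1) (Fin m2) ℝ) : ℝ :=
  ∑ i, ∑ j, A i j * B i j

/-- Entrywise multiplication by a realized sampling pattern `B0`; this models the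
observation operator 𝒳 for one realization of the Bernoulli masks. -/
noncomputable def hadB {m1 m2 : ℕ} (B0 A : Matrix (Fin m1) (Fin m2) ℝ) :
    Matrix (Fin m1) (Fin m2) ℝ :=
  Matrix.of fun i j => B0 i j * A i j

/-- The entries of `B` are i.i.d. Bernoulli(p) random variables (taking values 0/1). -/
def IsBernoulliMatrix {m1 m2 : ℕ} {Ω : Type} [MeasurableSpace Ω] (P : Measure Ω)
    (B : Ω → Matrix (Fin m1) (Fin m2) ℝ) (p : ℝ) : Prop :=
  (∀ i j, Measurable fun ω => B ω i j) ∧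
  (∀ ω i j, B ω i j = 0 ∨ B ω i j = 1) ∧
  (∀ i j, P {ω | B ω i j = 1} = ENNReal.ofReal p) ∧
  iIndepFun (fun q : Fin m1 × Fin m2 => fun ω => B ω q.1 q.2) P

/-- The noise entries are measurable, centered, with variance σ², and bounded by U a.s. -/
def IsBoundedNoise {m1 m2 : ℕ} {Ω : Type} [MeasurableSpace Ω] (P : Measure Ω)
    (E : Ω → Matrix (Fin m1) (Fin m2) ℝ) (σ U : ℝ) : Prop :=
  (∀ i j, Measurable fun ω => E ω i j) ∧
  (∀ i j, ∫ ω, E ω i j ∂P = 0) ∧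
  (∀ i j, ∫ ω, (E ω i j) ^ 2 ∂P = σ ^ 2) ∧
  (∀ i j, ∀ᵐ ω ∂P, |E ω i j| ≤ U)

/-- The entries of `e` are Rademacher (±1, fair) random variables. -/
def IsRademacherMatrix {m1 m2 : ℕ} {Ω : Type} [MeasurableSpace Ω] (P : Measure Ω)
    (e : Ω → Matrix (Fin m1) (Fin m2) ℝ) : Prop :=
  (∀ i j, Measurable fun ω => e ω i j) ∧
  (∀ ω i j, e ω i j = 1 ∨ e ω i j = -1) ∧
  (∀ i j, P {ω | e ω i j = 1} = 1 / 2)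

/-- The entries of `B` and `E` together form an independent family. -/
def JointlyIndep {m1 m2 : ℕ} {Ω : Type} [MeasurableSpace Ω] (P : Measure Ω)
    (B E : Ω → Matrix (Fin m1) (Fin m2) ℝ) : Prop :=
  iIndepFun
    (Sum.elim (fun q : Fin m1 × Fin m2 => fun ω => B ω q.1 q.2)
              (fun q : Fin m1 × Fin m2 => fun ω => E ω q.1 q.2)) P

/-- The class 𝒞(k,a): rank ≤ k, sup-norm ≤ a, and ‖M0−A‖₂² ≥ 256(a∨U)²zd/p. -/
def classC {m1 m2 : ℕ} (M0 : Matrix (Fin m1) (Fin m2) ℝ) (a U z p : ℝ) (k : ℕ) :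
    Set (Matrix (Fin m1) (Fin m2) ℝ) :=
  {A | (∀ i j, |A i j| ≤ a) ∧ 256 * (max a U) ^ 2 * z * (m1 + m2) / p ≤ frob2 (M0 - A) ∧
    A.rank ≤ k}

/-- 𝒞 = ∪_{k=1}^m 𝒞(k,a). -/
def classCfull {m1 m2 : ℕ} (M0 : Matrix (Fin m1) (Fin m2) ℝ) (a U z p : ℝ) :
    Set (Matrix (Fin m1) (Fin m2) ℝ) :=
  ⋃ k ∈ Finset.Icc 1 (min m1 m2), classC M0 a U z p k

/-- 𝒞(k,a,T) = {A ∈ 𝒞(k,a) : ‖M0−A‖₂ ≤ T}. -/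
def classCT {m1 m2 : ℕ} (M0 : Matrix (Fin m1) (Fin m2) ℝ) (a U z p : ℝ) (k : ℕ) (T : ℝ) :
    Set (Matrix (Fin m1) (Fin m2) ℝ) :=
  {A | A ∈ classC M0 a U z p k ∧ frob (M0 - A) ≤ T}

/-- 𝒟_δ(k,a,T) = {A : ‖A‖_∞ ≤ a, ‖A‖₂ ≤ δ, ‖A‖_* ≤ √k·T}. -/
def classD {m1 m2 : ℕ} (k : ℕ) (a δ T : ℝ) : Set (Matrix (Fin m1) (Fin m2) ℝ) :=
  {A | (∀ i j, |A i j| ≤ a) ∧ frob A ≤ δ ∧ nucNorm A ≤ Real.sqrt k * T}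


open Finset

section Helpers

variable {T : Type*}

lemma bddAbove_range_of_bound {F : T → ℝ} {C : ℝ} (h : ∀ t, F t ≤ C) :
    BddAbove (Set.range F) := ⟨C, by rintro x ⟨t, rfl⟩; exact h t⟩

/-- two-point contraction lemma -/
lemma two_point [Nonempty T] (A u v : T → ℝ)
    (bA : ∃ C, ∀ t, |A t| ≤ C) (bu : ∃ C, ∀ t, |u t| ≤ C) (bv : ∃ C, ∀ t, |v t| ≤ C)
    (h : ∀ t s, |v t - v s| ≤ |u t - u s|) :
    (⨆ t, A t + v t) + (⨆ t, A t - v t) ≤ (⨆ t, A t + u t) + (⨆ t, A t - u t) := by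
  obtain ⟨CA, hCA⟩ := bA
  obtain ⟨Cu, hCu⟩ := bu
  obtain ⟨Cv, hCv⟩ := bv
  have bdd1 : BddAbove (Set.range fun t => A t + u t) :=
    bddAbove_range_of_bound (C := CA + Cu) (fun t => by
      have := (abs_le.1 (hCA t)).2; have := (abs_le.1 (hCu t)).2; linarith)
  have bdd2 : BddAbove (Set.range fun t => A t - u t) :=
    bddAbove_range_of_bound (C := CA + Cu) (fun t => by
      have := (abs_le.1 (hCA t)).2; have := (abs_le.1 (hCu t)).1; linarith)
  refine le_of_forall_pos_le_add (fun η hη => ?_)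
  obtain ⟨t, ht⟩ : ∃ t, (⨆ t, A t + v t) - η/2 < A t + v t := by
    obtain ⟨_, ⟨t, rfl⟩, h'⟩ := exists_lt_of_lt_csSup
      (Set.range_nonempty _)
      (show (⨆ t, A t + v t) - η/2 < ⨆ t, A t + v t by
        have hle : (⨆ t, A t + v t) ≤ CA + Cv := ciSup_le (fun t => by
          have := (abs_le.1 (hCA t)).2; have := (abs_le.1 (hCv t)).2; linarith)
        linarith)
    exact ⟨t, h'⟩
  obtain ⟨s, hs⟩ : ∃ s, (⨆ t, A t - v t) - η/2 < A s - v s := by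
    obtain ⟨_, ⟨s, rfl⟩, h'⟩ := exists_lt_of_lt_csSup
      (Set.range_nonempty _)
      (show (⨆ t, A t - v t) - η/2 < ⨆ t, A t - v t by
        have hle : (⨆ t, A t - v t) ≤ CA + Cv := ciSup_le (fun t => by
          have := (abs_le.1 (hCA t)).2; have := (abs_le.1 (hCv t)).1; linarith)
        linarith)
    exact ⟨s, h'⟩
  have key : v t - v s ≤ |u t - u s| := (le_abs_self _).trans (h t s)
  rcases le_total (u s) (u t) with hc | hc
  · have h1 : A t + v t + (A s - v s) ≤ (A t + u t) + (A s - u s) := by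
      have : |u t - u s| = u t - u s := abs_of_nonneg (by linarith)
      linarith [key]
    have h2 : A t + u t ≤ ⨆ t, A t + u t := le_ciSup bdd1 t
    have h3 : A s - u s ≤ ⨆ t, A t - u t := le_ciSup bdd2 s
    linarith
  · have h1 : A t + v t + (A s - v s) ≤ (A s + u s) + (A t - u t) := by
      have : |u t - u s| = u s - u t := by rw [abs_sub_comm]; exact abs_of_nonneg (by linarith)
      linarith [key]
    have h2 : A s + u s ≤ ⨆ t, A t + u t := le_ciSup bdd1 s
    have h3 : A t - u t ≤ ⨆ t, A t - u t := le_ciSup bdd2 t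
    linarith

end Helpers

section Contraction

variable {ι : Type*} [Fintype ι] [DecidableEq ι] {T : Type*} [Nonempty T]

noncomputable def bsgn (b : Bool) : ℝ := if b then 1 else -1

lemma bsgn_abs (b : Bool) : |bsgn b| = 1 := by cases b <;> simp [bsgn]

lemma bsgn_not (b : Bool) : bsgn (!b) = -bsgn b := by cases b <;> simp [bsgn]

noncomputable def cF (u v : ι → T → ℝ) (K : Finset ι) (τ : ι → Bool) : ℝ :=
  ⨆ t, (∑ q ∈ K, bsgn (τ q) * u q t + ∑ q ∈ Kᶜ, bsgn (τ q) * v q t)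

lemma abs_sgn_sum_le {C : ℝ} (g : ι → T → ℝ) (hg : ∀ q t, |g q t| ≤ C)
    (s : Finset ι) (τ : ι → Bool) (t : T) :
    |∑ q ∈ s, bsgn (τ q) * g q t| ≤ s.card * C := by
  calc |∑ q ∈ s, bsgn (τ q) * g q t| ≤ ∑ q ∈ s, |bsgn (τ q) * g q t| :=
        Finset.abs_sum_le_sum_abs _ _
    _ ≤ ∑ q ∈ s, C := Finset.sum_le_sum (fun q _ => by
        rw [abs_mul, bsgn_abs, one_mul]; exact hg q t)
    _ = s.card * C := by rw [Finset.sum_const, nsmul_eq_mul]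

noncomputable def flipj (j : ι) : (ι → Bool) ≃ (ι → Bool) :=
  Function.Involutive.toPerm (fun τ => Function.update τ j (!(τ j)))
    (fun τ => by
      funext q
      by_cases hq : q = j
      · subst hq; simp [Function.update_self]
      · simp [Function.update_of_ne hq])

lemma cF_step (u v : ι → T → ℝ) {Cu Cv : ℝ} (hu : ∀ q t, |u q t| ≤ Cu)
    (hv : ∀ q t, |v q t| ≤ Cv)
    (h : ∀ q t s, |v q t - v q s| ≤ |u q t - u q s|)
    (K : Finset ι) (j : ι) (hj : j ∉ K) :
    ∑ τ : ι → Bool, cF u v K τ ≤ ∑ τ : ι → Bool, cF u v (insert j K) τ := by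
  have hflip : ∀ (W : Finset ι), ∑ τ' : ι → Bool, cF u v W τ' =
      ∑ τ' : ι → Bool, cF u v W (flipj j τ') := by
    intro W
    exact (Fintype.sum_equiv (flipj j) _ _ (fun τ' => rfl)).symm
  have key : ∀ τ : ι → Bool,
      cF u v K τ + cF u v K (flipj j τ) ≤
      cF u v (insert j K) τ + cF u v (insert j K) (flipj j τ) := by
    intro τ
    set A : T → ℝ := fun t => ∑ q ∈ K, bsgn (τ q) * u q t + ∑ q ∈ Kᶜ.erase j, bsgn (τ q) * v q t with hA
    have hjc : j ∈ Kᶜ := Finset.mem_compl.2 hj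
    have flip_eval : ∀ q, q ≠ j → bsgn ((flipj j τ) q) = bsgn (τ q) := by
      intro q hq
      simp [flipj, Function.Involutive.toPerm, Function.update_of_ne hq]
    have flip_evalj : bsgn ((flipj j τ) j) = -bsgn (τ j) := by
      simp [flipj, Function.Involutive.toPerm, Function.update_self, bsgn_not]
    have e1 : cF u v K τ = ⨆ t, A t + bsgn (τ j) * v j t := by
      unfold cF
      congr 1; funext t
      rw [← Finset.add_sum_erase _ (fun q => bsgn (τ q) * v q t) hjc]
      simp only [hA]; ring
    have e2 : cF u v K (flipj j τ) = ⨆ t, A t - bsgn (τ j) * v j t := by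
      unfold cF
      congr 1; funext t
      have hK : ∑ q ∈ K, bsgn ((flipj j) τ q) * u q t = ∑ q ∈ K, bsgn (τ q) * u q t :=
        Finset.sum_congr rfl (fun q hq => by rw [flip_eval q (fun hqj => hj (hqj ▸ hq))])
      have hCe : ∑ q ∈ Kᶜ.erase j, bsgn ((flipj j) τ q) * v q t =
          ∑ q ∈ Kᶜ.erase j, bsgn (τ q) * v q t :=
        Finset.sum_congr rfl (fun q hq => by rw [flip_eval q (Finset.ne_of_mem_erase hq)])
      rw [← Finset.add_sum_erase _ (fun q => bsgn ((flipj j) τ q) * v q t) hjc, hK, hCe,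
        flip_evalj]
      simp only [hA]; ring
    have e3 : cF u v (insert j K) τ = ⨆ t, A t + bsgn (τ j) * u j t := by
      unfold cF
      congr 1; funext t
      rw [Finset.sum_insert hj, Finset.compl_insert]
      simp only [hA]; ring
    have e4 : cF u v (insert j K) (flipj j τ) = ⨆ t, A t - bsgn (τ j) * u j t := by
      unfold cF
      congr 1; funext t
      have hK : ∑ q ∈ K, bsgn ((flipj j) τ q) * u q t = ∑ q ∈ K, bsgn (τ q) * u q t :=
        Finset.sum_congr rfl (fun q hq => by rw [flip_eval q (fun hqj => hj (hqj ▸ hq))])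
      have hCe : ∑ q ∈ (insert j K)ᶜ, bsgn ((flipj j) τ q) * v q t =
          ∑ q ∈ Kᶜ.erase j, bsgn (τ q) * v q t := by
        rw [Finset.compl_insert]
        exact Finset.sum_congr rfl (fun q hq => by rw [flip_eval q (Finset.ne_of_mem_erase hq)])
      rw [Finset.sum_insert hj, hK, hCe, flip_evalj]
      simp only [hA]; ring
    rw [e1, e2, e3, e4]
    refine two_point A (fun t => bsgn (τ j) * u j t) (fun t => bsgn (τ j) * v j t)
      ⟨K.card * Cu + (Kᶜ.erase j).card * Cv, fun t => ?_⟩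
      ⟨Cu, fun t => by rw [abs_mul, bsgn_abs, one_mul]; exact hu j t⟩
      ⟨Cv, fun t => by rw [abs_mul, bsgn_abs, one_mul]; exact hv j t⟩
      (fun t s => by
        rw [← mul_sub, ← mul_sub, abs_mul, abs_mul, bsgn_abs, one_mul, one_mul]
        exact h j t s)
    · calc |A t| ≤ |∑ q ∈ K, bsgn (τ q) * u q t| + |∑ q ∈ Kᶜ.erase j, bsgn (τ q) * v q t| :=
            abs_add_le _ _
        _ ≤ K.card * Cu + (Kᶜ.erase j).card * Cv :=
            add_le_add (abs_sgn_sum_le u hu K τ t) (abs_sgn_sum_le v hv _ τ t)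
  have h2 : (2:ℝ) * ∑ τ : ι → Bool, cF u v K τ ≤ 2 * ∑ τ : ι → Bool, cF u v (insert j K) τ := by
    have lhs : (2:ℝ) * ∑ τ : ι → Bool, cF u v K τ =
        ∑ τ : ι → Bool, (cF u v K τ + cF u v K (flipj j τ)) := by
      rw [Finset.sum_add_distrib, ← hflip K]; ring
    have rhs : (2:ℝ) * ∑ τ : ι → Bool, cF u v (insert j K) τ =
        ∑ τ : ι → Bool, (cF u v (insert j K) τ + cF u v (insert j K) (flipj j τ)) := by
      rw [Finset.sum_add_distrib, ← hflip (insert j K)]; ring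
    rw [lhs, rhs]
    exact Finset.sum_le_sum (fun τ _ => key τ)
  linarith

lemma contraction_avg (u v : ι → T → ℝ) {Cu Cv : ℝ} (hu : ∀ q t, |u q t| ≤ Cu)
    (hv : ∀ q t, |v q t| ≤ Cv)
    (h : ∀ q t s, |v q t - v q s| ≤ |u q t - u q s|) :
    ∑ τ : ι → Bool, (⨆ t, ∑ q, bsgn (τ q) * v q t) ≤
      ∑ τ : ι → Bool, ⨆ t, ∑ q, bsgn (τ q) * u q t := by
  have main : ∀ K : Finset ι, ∑ τ : ι → Bool, cF u v ∅ τ ≤ ∑ τ : ι → Bool, cF u v K τ := by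
    intro K
    induction K using Finset.induction_on with
    | empty => exact le_refl _
    | insert _ _ hj => exact le_trans (by assumption) (cF_step u v hu hv h _ _ hj)
  have base : ∀ τ, cF u v ∅ τ = ⨆ t, ∑ q, bsgn (τ q) * v q t := by
    intro τ; unfold cF
    congr 1; funext t; simp
  have top : ∀ τ, cF u v Finset.univ τ = ⨆ t, ∑ q, bsgn (τ q) * u q t := by
    intro τ; unfold cF
    congr 1; funext t; simp
  calc ∑ τ : ι → Bool, (⨆ t, ∑ q, bsgn (τ q) * v q t)
      = ∑ τ : ι → Bool, cF u v ∅ τ := by rw [Finset.sum_congr rfl (fun τ _ => (base τ).symm)]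
    _ ≤ ∑ τ : ι → Bool, cF u v Finset.univ τ := main Finset.univ
    _ = ∑ τ : ι → Bool, ⨆ t, ∑ q, bsgn (τ q) * u q t := Finset.sum_congr rfl (fun τ _ => top τ)

end Contraction


section SumProd
variable {ι : Type*} [Fintype ι] [DecidableEq ι]

lemma sum_prod_bool (f : ι → Bool → ℝ) :
    ∑ β : ι → Bool, ∏ q, f q (β q) = ∏ q, (f q true + f q false) := by
  have h : ∀ q : ι, (f q true + f q false) = ∑ b : Bool, f q b := by
    intro q; rw [Fintype.sum_bool]
  rw [Finset.prod_congr rfl (fun q _ => h q)]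
  rw [Finset.prod_univ_sum]
  rw [Fintype.piFinset_univ]

variable {p : ℝ}

noncomputable def wgt (p : ℝ) (b : Bool) : ℝ := if b then p else 1 - p

lemma wgt_sum_one : wgt p true + wgt p false = 1 := by simp [wgt]

lemma sum_wgt_prod_eq_one : ∑ β : ι → Bool, ∏ q, wgt p (β q) = 1 := by
  rw [sum_prod_bool]
  rw [Finset.prod_congr rfl (fun q _ => wgt_sum_one)]
  simp

noncomputable def wgt2 (p : ℝ) (q0 : ι) (g : Bool → ℝ) (q : ι) (b : Bool) : ℝ :=
  if q = q0 then wgt p b * g b else wgt p b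

lemma sum_wgt_marg (q0 : ι) (g : Bool → ℝ) :
    ∑ β : ι → Bool, (∏ q, wgt p (β q)) * g (β q0) =
      p * g true + (1 - p) * g false := by
  have key : ∀ β : ι → Bool, (∏ q, wgt p (β q)) * g (β q0) =
      ∏ q, wgt2 p q0 g q (β q) := by
    intro β
    rw [← Finset.prod_erase_mul _ (fun q => wgt p (β q)) (Finset.mem_univ q0),
        ← Finset.prod_erase_mul _ (fun q => wgt2 p q0 g q (β q)) (Finset.mem_univ q0)]
    have h1 : ∀ q ∈ Finset.univ.erase q0, wgt2 p q0 g q (β q) = wgt p (β q) := by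
      intro q hq
      unfold wgt2
      rw [if_neg (Finset.ne_of_mem_erase hq)]
    rw [Finset.prod_congr rfl h1]
    unfold wgt2
    rw [if_pos rfl]
    ring
  rw [Finset.sum_congr rfl (fun β _ => key β)]
  rw [sum_prod_bool (wgt2 p q0 g)]
  rw [Finset.prod_eq_single q0 (fun q _ hq => by unfold wgt2; rw [if_neg hq, if_neg hq, wgt_sum_one])
    (fun h => absurd (Finset.mem_univ _) h)]
  unfold wgt2
  rw [if_pos rfl, if_pos rfl]
  simp [wgt]

end SumProd

section SupHelp
variable {T : Type*} [Nonempty T] {σ : Type*}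

lemma ciSup_weighted_sum_le (S : Finset σ) (w : σ → ℝ) (g : σ → T → ℝ)
    (hw : ∀ s, 0 ≤ w s) (bdd : ∀ s, BddAbove (Set.range (g s))) :
    (⨆ t, ∑ s ∈ S, w s * g s t) ≤ ∑ s ∈ S, w s * ⨆ t, g s t :=
  ciSup_le (fun t => Finset.sum_le_sum (fun s _ =>
    mul_le_mul_of_nonneg_left (le_ciSup (bdd s) t) (hw s)))

lemma ciSup_const_mul {c : ℝ} (hc : 0 ≤ c) (f : T → ℝ)
    (bdd : BddAbove (Set.range f)) :
    (⨆ t, c * f t) = c * ⨆ t, f t := by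
  rcases eq_or_lt_of_le hc with hc0 | hc0
  · simp [← hc0]
  · apply le_antisymm
    · exact ciSup_le (fun t => mul_le_mul_of_nonneg_left (le_ciSup bdd t) hc)
    · rw [mul_comm, ← le_div_iff₀ hc0]
      refine ciSup_le (fun t => ?_)
      rw [le_div_iff₀ hc0, mul_comm]
      obtain ⟨b, hb⟩ := bdd
      refine le_ciSup (⟨c * b, ?_⟩ : BddAbove (Set.range fun t => c * f t)) t
      rintro x ⟨t', rfl⟩
      exact mul_le_mul_of_nonneg_left (hb (Set.mem_range_self t')) hc

end SupHelp

section Dual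
open Matrix
variable {m1 m2 : ℕ}

lemma dot_le_sqrt (x y : Fin m1 → ℝ) :
    (∑ i, x i * y i) ≤ Real.sqrt (∑ i, x i ^ 2) * Real.sqrt (∑ i, y i ^ 2) := by
  have h := Finset.sum_mul_sq_le_sq_mul_sq Finset.univ x y
  have hrhs : 0 ≤ Real.sqrt (∑ i, x i ^ 2) * Real.sqrt (∑ i, y i ^ 2) :=
    mul_nonneg (Real.sqrt_nonneg _) (Real.sqrt_nonneg _)
  rcases le_or_gt (∑ i, x i * y i) 0 with hc | hc
  · linarith
  · have : (∑ i, x i * y i) = Real.sqrt ((∑ i, x i * y i) ^ 2) := by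
      rw [Real.sqrt_sq hc.le]
    rw [this, ← Real.sqrt_mul (by positivity) (∑ i, y i ^ 2)]
    exact Real.sqrt_le_sqrt h

lemma sum_sq_mulVec_le (A : Matrix (Fin m1) (Fin m2) ℝ) (v : Fin m2 → ℝ)
    (hv : ∑ j, (v j) ^ 2 ≤ 1) : ∑ i, (A.mulVec v i) ^ 2 ≤ frob2 A := by
  unfold frob2
  refine Finset.sum_le_sum (fun i _ => ?_)
  have h := Finset.sum_mul_sq_le_sq_mul_sq Finset.univ (fun j => A i j) v
  calc (A.mulVec v i) ^ 2 = (∑ j, A i j * v j) ^ 2 := by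
        simp [Matrix.mulVec, dotProduct]
    _ ≤ (∑ j, A i j ^ 2) * ∑ j, v j ^ 2 := h
    _ ≤ (∑ j, A i j ^ 2) * 1 := by
        refine mul_le_mul_of_nonneg_left hv (by positivity)
    _ = ∑ j, A i j ^ 2 := mul_one _

lemma opNorm_bddAbove (A : Matrix (Fin m1) (Fin m2) ℝ) :
    BddAbove (Set.range fun v : {v : Fin m2 → ℝ // ∑ j, (v j) ^ 2 ≤ 1} =>
      Real.sqrt (∑ i, (A.mulVec v.1 i) ^ 2)) := by
  refine ⟨Real.sqrt (frob2 A), ?_⟩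
  rintro x ⟨v, rfl⟩
  exact Real.sqrt_le_sqrt (sum_sq_mulVec_le A v.1 v.2)

lemma sqrt_mulVec_le_opNorm (A : Matrix (Fin m1) (Fin m2) ℝ) (v : Fin m2 → ℝ)
    (hv : ∑ j, (v j) ^ 2 ≤ 1) :
    Real.sqrt (∑ i, (A.mulVec v i) ^ 2) ≤ opNorm A :=
  le_ciSup (opNorm_bddAbove A) ⟨v, hv⟩

lemma opNorm_nonneg (A : Matrix (Fin m1) (Fin m2) ℝ) : 0 ≤ opNorm A :=
  le_trans (Real.sqrt_nonneg _) (sqrt_mulVec_le_opNorm A 0 (by simp))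

/-- Trace duality: ⟨M, A⟩ ≤ ‖M‖_op ‖A‖_*. -/
lemma mdot_le_opNorm_mul_nucNorm (M A : Matrix (Fin m1) (Fin m2) ℝ) :
    mdot M A ≤ opNorm M * nucNorm A := by
  set hA := (show (A.transpose * A).IsHermitian by
    simpa [Matrix.conjTranspose_eq_transpose_of_trivial] using
      Matrix.isHermitian_conjTranspose_mul_self A) with hhA
  set w : Fin m2 → (Fin m2 → ℝ) := fun l => ⇑(hA.eigenvectorBasis l) with hw
  -- orthonormality
  have orth : ∀ l l', (∑ j, w l j * w l' j) = if l = l' then 1 else 0 := by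
    intro l l'
    have h := hA.eigenvectorBasis.orthonormal
    rw [orthonormal_iff_ite] at h
    have := h l l'
    rw [PiLp.inner_apply] at this
    simpa [hw, mul_comm] using this
    
  -- completeness
  have compl : ∀ j j', (∑ l, w l j * w l j') = if j = j' then 1 else 0 := by
    intro j j'
    have hmem : (hA.eigenvectorUnitary : Matrix (Fin m2) (Fin m2) ℝ) ∈
        Matrix.unitaryGroup (Fin m2) ℝ := (hA.eigenvectorUnitary).2
    have h1 : (hA.eigenvectorUnitary : Matrix (Fin m2) (Fin m2) ℝ) *
        star (hA.eigenvectorUnitary : Matrix (Fin m2) (Fin m2) ℝ) = 1 :=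
      (Matrix.mem_unitaryGroup_iff).1 hmem
    have := congrArg (fun X => X j j') h1
    simp only [Matrix.mul_apply, Matrix.one_apply] at this
    rw [← this]
    refine Finset.sum_congr rfl (fun l _ => ?_)
    rw [Matrix.star_apply, Matrix.IsHermitian.eigenvectorUnitary_apply,
      Matrix.IsHermitian.eigenvectorUnitary_apply]
    simp [hw, mul_comm]
  -- eigen equation
  have eig : ∀ l, ∑ i, (A.mulVec (w l) i) ^ 2 = hA.eigenvalues l := by
    intro l
    have h1 : (Aᴴ * A) *ᵥ (w l) = hA.eigenvalues l • (w l) := hA.mulVec_eigenvectorBasis l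
    have h2 : ∑ i, (A.mulVec (w l) i) ^ 2 = (w l) ⬝ᵥ ((Aᴴ * A) *ᵥ (w l)) := by
      rw [← Matrix.mulVec_mulVec]
      rw [dotProduct_mulVec]
      have : (w l) ᵥ* Aᴴ = A *ᵥ (w l) := by
        funext i
        simp [Matrix.vecMul, Matrix.mulVec, dotProduct, Matrix.conjTranspose_apply,
          mul_comm]
      rw [this]
      simp [dotProduct, pow_two]
    rw [h2, h1]
    have : (w l) ⬝ᵥ (hA.eigenvalues l • (w l)) = hA.eigenvalues l * ∑ j, w l j * w l j := by
      simp [dotProduct, Finset.mul_sum]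
      exact Finset.sum_congr rfl (fun j _ => by ring)
    rw [this, orth l l, if_pos rfl, mul_one]
  -- unit norm
  have unit : ∀ l, ∑ j, (w l j) ^ 2 ≤ 1 := by
    intro l
    have := orth l l
    rw [if_pos rfl] at this
    rw [show (∑ j, (w l j)^2) = ∑ j, w l j * w l j from
      Finset.sum_congr rfl (fun j _ => sq (w l j) ▸ by ring), this]
  -- expansion of mdot via matrix algebra
  set V : Matrix (Fin m2) (Fin m2) ℝ := (hA.eigenvectorUnitary : Matrix (Fin m2) (Fin m2) ℝ)
    with hV
  have hVw : ∀ j l, V j l = w l j := by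
    intro j l
    rw [hV, Matrix.IsHermitian.eigenvectorUnitary_apply]
  have hVT : star V = Vᵀ := by
    funext j l
    simp [Matrix.star_apply, Matrix.transpose_apply]
  have hVV : V * Vᵀ = 1 := by
    rw [← hVT]
    exact (Matrix.mem_unitaryGroup_iff).1 (hA.eigenvectorUnitary).2
  have expand : mdot M A = ∑ l, (∑ i, (M.mulVec (w l) i) * (A.mulVec (w l) i)) := by
    have h1 : ∀ (X : Matrix (Fin m1) (Fin m2) ℝ) l i, X.mulVec (w l) i = (X * V) i l := by
      intro X l i
      rw [Matrix.mul_apply]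
      simp only [Matrix.mulVec, dotProduct]
      exact Finset.sum_congr rfl (fun j _ => by rw [hVw])
    have h2 : ∑ l, (∑ i, (M.mulVec (w l) i) * (A.mulVec (w l) i)) =
        Matrix.trace ((M * V)ᵀ * (A * V)) := by
      unfold Matrix.trace
      refine Finset.sum_congr rfl (fun l _ => ?_)
      rw [Matrix.diag_apply, Matrix.mul_apply]
      exact Finset.sum_congr rfl (fun i _ => by
        rw [Matrix.transpose_apply, h1 M l i, h1 A l i])
    have h3 : (M * V)ᵀ * (A * V) = Vᵀ * (Mᵀ * A) * V := by
      rw [Matrix.transpose_mul]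
      rw [Matrix.mul_assoc, Matrix.mul_assoc, Matrix.mul_assoc]
    have h4 : Matrix.trace (Vᵀ * (Mᵀ * A) * V) = Matrix.trace (Mᵀ * A) := by
      rw [Matrix.trace_mul_comm, ← Matrix.mul_assoc, hVV, Matrix.one_mul]
    have h5 : Matrix.trace (Mᵀ * A) = mdot M A := by
      unfold Matrix.trace mdot
      rw [Finset.sum_comm]
      refine Finset.sum_congr rfl (fun j _ => ?_)
      rw [Matrix.diag_apply, Matrix.mul_apply]
      exact Finset.sum_congr rfl (fun i _ => by rw [Matrix.transpose_apply])
    rw [h2, h3, h4, h5]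
  rw [expand]
  unfold nucNorm
  rw [Finset.mul_sum]
  refine Finset.sum_le_sum (fun l _ => ?_)
  calc (∑ i, (M.mulVec (w l) i) * (A.mulVec (w l) i))
      ≤ Real.sqrt (∑ i, (M.mulVec (w l) i) ^ 2) * Real.sqrt (∑ i, (A.mulVec (w l) i) ^ 2) :=
        dot_le_sqrt _ _
    _ ≤ opNorm M * Real.sqrt (∑ i, (A.mulVec (w l) i) ^ 2) :=
        mul_le_mul_of_nonneg_right (sqrt_mulVec_le_opNorm M (w l) (unit l))
          (Real.sqrt_nonneg _)
    _ = opNorm M * Real.sqrt (hA.eigenvalues l) := by rw [eig l]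

end Dual

section Small
variable {m1 m2 : ℕ}

lemma frob2_nonneg (A : Matrix (Fin m1) (Fin m2) ℝ) : 0 ≤ frob2 A := by
  unfold frob2; positivity

lemma frob_sq (A : Matrix (Fin m1) (Fin m2) ℝ) : (frob A) ^ 2 = frob2 A := by
  unfold frob; rw [Real.sq_sqrt (frob2_nonneg A)]

lemma frob_nonneg (A : Matrix (Fin m1) (Fin m2) ℝ) : 0 ≤ frob A := Real.sqrt_nonneg _

lemma nucNorm_nonneg (A : Matrix (Fin m1) (Fin m2) ℝ) : 0 ≤ nucNorm A := by
  unfold nucNorm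
  exact Finset.sum_nonneg (fun i _ => Real.sqrt_nonneg _)

lemma nucNorm_zero : nucNorm (0 : Matrix (Fin m1) (Fin m2) ℝ) = 0 := by
  unfold nucNorm
  refine Finset.sum_eq_zero (fun i _ => ?_)
  rw [Matrix.IsHermitian.eigenvalues_eq]
  simp

lemma frob_zero : frob (0 : Matrix (Fin m1) (Fin m2) ℝ) = 0 := by
  unfold frob frob2; simp

end Small


noncomputable def bval (b : Bool) : ℝ := if b then 1 else 0

lemma bval_nonneg (b : Bool) : 0 ≤ bval b := by cases b <;> norm_num [bval]
lemma bval_le_one (b : Bool) : bval b ≤ 1 := by cases b <;> norm_num [bval]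
lemma bsgn_le_one (b : Bool) : bsgn b ≤ 1 := by cases b <;> norm_num [bsgn]

section Fin

noncomputable def bmat {m1 m2 : ℕ} (β : Fin m1 × Fin m2 → Bool) :
    Matrix (Fin m1) (Fin m2) ℝ := Matrix.of fun i j => bval (β (i, j))

noncomputable def emat {m1 m2 : ℕ} (τ : Fin m1 × Fin m2 → Bool) :
    Matrix (Fin m1) (Fin m2) ℝ := Matrix.of fun i j => bsgn (τ (i, j))

noncomputable def wB {m1 m2 : ℕ} (p : ℝ) (β : Fin m1 × Fin m2 → Bool) : ℝ :=
  ∏ q : Fin m1 × Fin m2, wgt p (β q)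

variable {m1 m2 : ℕ} {Ω : Type} [MeasurableSpace Ω] {P : Measure Ω} [IsProbabilityMeasure P]
  {B eR : Ω → Matrix (Fin m1) (Fin m2) ℝ} {p : ℝ}

open Classical in
/-- Reduction of expectations to finite sums over Boolean sign/mask patterns. -/
lemma fin_reduction (hB : IsBernoulliMatrix P B p) (heR : IsRademacherMatrix P eR)
    (hBeR : JointlyIndep P B eR) (hp0 : 0 ≤ p) (hp1 : p ≤ 1)
    (G : Matrix (Fin m1) (Fin m2) ℝ → Matrix (Fin m1) (Fin m2) ℝ → ℝ) :
    ∫ ω, G (B ω) (eR ω) ∂P =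
      ∑ β : Fin m1 × Fin m2 → Bool, ∑ τ : Fin m1 × Fin m2 → Bool,
        (wB p β * (1 / 2) ^ (Fintype.card (Fin m1 × Fin m2))) * G (bmat β) (emat τ) := by
  set ι := (Fin m1 × Fin m2)
  set Sig := ((ι → Bool) × (ι → Bool))
  set f : ι ⊕ ι → Ω → ℝ := Sum.elim (fun q ω => B ω q.1 q.2) (fun q ω => eR ω q.1 q.2) with hf
  set tval : Sig → ι ⊕ ι → ℝ :=
    fun s => Sum.elim (fun q => bval (s.1 q)) (fun q => bsgn (s.2 q)) with htval
  set sig : Ω → Sig := fun ω =>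
    (fun q => if B ω q.1 q.2 = 1 then true else false,
     fun q => if eR ω q.1 q.2 = 1 then true else false) with hsig
  have hBs : ∀ ω, B ω = bmat ((sig ω).1) := by
    intro ω
    ext i j
    show B ω i j = bval (if B ω i j = 1 then true else false)
    rcases hB.2.1 ω i j with h | h <;> rw [h] <;> norm_num [bval]
  have hes : ∀ ω, eR ω = emat ((sig ω).2) := by
    intro ω
    ext i j
    show eR ω i j = bsgn (if eR ω i j = 1 then true else false)
    rcases heR.2.1 ω i j with h | h <;> rw [h] <;> norm_num [bsgn]
  -- the events
  set E : Sig → Set Ω := fun s => ⋂ i, (f i) ⁻¹' {tval s i} with hE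
  have hEs : ∀ s, E s = sig ⁻¹' {s} := by
    intro s
    ext ω
    simp only [hE, Set.mem_iInter, Set.mem_preimage, Set.mem_singleton_iff]
    constructor
    · intro h
      have h1 : (sig ω).1 = s.1 := by
        funext q
        have := h (Sum.inl q)
        simp only [hf, htval, Sum.elim_inl] at this
        show (if B ω q.1 q.2 = 1 then true else false) = s.1 q
        rcases hB.2.1 ω q.1 q.2 with hb | hb <;> cases hs : s.1 q <;>
            rw [hb] at this ⊢ <;> rw [hs] at this <;> simp only [bval] at this
        · rw [if_neg (by norm_num : ¬ (0:ℝ) = 1)]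
        · norm_num at this
        · norm_num at this
        · rw [if_pos rfl]
      have h2 : (sig ω).2 = s.2 := by
        funext q
        have := h (Sum.inr q)
        simp only [hf, htval, Sum.elim_inr] at this
        show (if eR ω q.1 q.2 = 1 then true else false) = s.2 q
        rcases heR.2.1 ω q.1 q.2 with hb | hb <;> cases hs : s.2 q <;>
            rw [hb] at this ⊢ <;> rw [hs] at this <;> simp only [bsgn] at this
        · norm_num at this
        · rw [if_pos rfl]
        · rw [if_neg (by norm_num : ¬ (-1:ℝ) = 1)]
        · norm_num at this
      exact Prod.ext h1 h2
    · intro h i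
      subst h
      cases i with
      | inl q =>
        simp only [hf, htval, Sum.elim_inl]
        rcases hB.2.1 ω q.1 q.2 with hb | hb <;> rw [hb] <;> norm_num [bval, hsig, hb]
      | inr q =>
        simp only [hf, htval, Sum.elim_inr]
        rcases heR.2.1 ω q.1 q.2 with hb | hb <;> rw [hb] <;> norm_num [bsgn, hsig, hb]
  have hmeasf : ∀ i c, MeasurableSet ((f i) ⁻¹' {(c : ℝ)}) := by
    intro i c
    cases i with
    | inl q => exact (hB.1 q.1 q.2) (measurableSet_singleton c)
    | inr q => exact (heR.1 q.1 q.2) (measurableSet_singleton c)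
  have hmeasE : ∀ s, MeasurableSet (E s) := fun s =>
    MeasurableSet.iInter (fun i => hmeasf i (tval s i))
  -- decompose the integral
  have hdecomp : (fun ω => G (B ω) (eR ω)) =
      fun ω => ∑ s : Sig, (E s).indicator (fun _ => G (bmat s.1) (emat s.2)) ω := by
    funext ω
    rw [Finset.sum_eq_single (sig ω)]
    · rw [Set.indicator_of_mem (by rw [hEs]; exact rfl)]
      rw [hBs ω, hes ω]
    · intro s _ hne
      exact Set.indicator_of_notMem (by rw [hEs]; simpa using hne.symm) _
    · intro h
      exact absurd (Finset.mem_univ _) h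
  rw [hdecomp, integral_finset_sum _ (fun s _ =>
    (integrable_const _).indicator (hmeasE s))]
  -- each piece
  have hpiece : ∀ s : Sig, ∫ ω, (E s).indicator (fun _ => G (bmat s.1) (emat s.2)) ω ∂P =
      (P (E s)).toReal * G (bmat s.1) (emat s.2) := by
    intro s
    rw [integral_indicator_const _ (hmeasE s)]
    simp [smul_eq_mul, Measure.real]
  -- probability of E s
  have hPE : ∀ s : Sig, (P (E s)).toReal =
      wB p s.1 * (1 / 2) ^ (Fintype.card ι) := by
    intro s
    have h1 : E s = ⋂ i ∈ (Finset.univ : Finset (ι ⊕ ι)), (f i) ⁻¹' {tval s i} := by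
      rw [hE]; simp
    have h2 : P (E s) = ∏ i : ι ⊕ ι, P ((f i) ⁻¹' {tval s i}) := by
      rw [h1]
      exact hBeR.measure_inter_preimage_eq_mul Finset.univ
        (fun i _ => measurableSet_singleton _)
    have hBprob : ∀ q : ι, (P ((f (Sum.inl q)) ⁻¹' {tval s (Sum.inl q)})).toReal =
        (if s.1 q then p else 1 - p) := by
      intro q
      have hone : (f (Sum.inl q)) ⁻¹' {(1:ℝ)} = {ω | B ω q.1 q.2 = 1} := by
        ext ω; simp [hf]
      have hPone : P ((f (Sum.inl q)) ⁻¹' {(1:ℝ)}) = ENNReal.ofReal p := by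
        rw [hone]; exact hB.2.2.1 q.1 q.2
      cases hs : s.1 q
      · -- value 0 : complement
        have hzero : (f (Sum.inl q)) ⁻¹' {(0:ℝ)} = ((f (Sum.inl q)) ⁻¹' {(1:ℝ)})ᶜ := by
          ext ω
          simp only [hf, Set.mem_preimage, Set.mem_singleton_iff, Set.mem_compl_iff,
            Sum.elim_inl]
          rcases hB.2.1 ω q.1 q.2 with hb | hb <;> rw [hb] <;> norm_num
        have hthis : P ((f (Sum.inl q)) ⁻¹' {(0:ℝ)}) = 1 - ENNReal.ofReal p := by
          rw [hzero, measure_compl (hmeasf _ _) (measure_ne_top P _), hPone]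
          simp
        have hv : tval s (Sum.inl q) = 0 := by simp [htval, hs, bval]
        rw [hv, hthis, ENNReal.toReal_sub_of_le (ENNReal.ofReal_le_one.2 hp1)
          ENNReal.one_ne_top]
        simp [ENNReal.toReal_ofReal hp0, hs]
      · have hv : tval s (Sum.inl q) = 1 := by simp [htval, hs, bval]
        rw [hv, hPone, ENNReal.toReal_ofReal hp0]
        simp [hs]
    have heprob : ∀ q : ι, (P ((f (Sum.inr q)) ⁻¹' {tval s (Sum.inr q)})).toReal
        = (1/2 : ℝ) := by
      intro q
      have hone : (f (Sum.inr q)) ⁻¹' {(1:ℝ)} = {ω | eR ω q.1 q.2 = 1} := by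
        ext ω; simp [hf]
      have hPone : P ((f (Sum.inr q)) ⁻¹' {(1:ℝ)}) = 1/2 := by
        rw [hone]; exact heR.2.2 q.1 q.2
      cases hs : s.2 q
      · have hneg : (f (Sum.inr q)) ⁻¹' {(-1:ℝ)} = ((f (Sum.inr q)) ⁻¹' {(1:ℝ)})ᶜ := by
          ext ω
          simp only [hf, Set.mem_preimage, Set.mem_singleton_iff, Set.mem_compl_iff,
            Sum.elim_inr]
          rcases heR.2.1 ω q.1 q.2 with hb | hb <;> rw [hb] <;> norm_num
        have hthis : P ((f (Sum.inr q)) ⁻¹' {(-1:ℝ)}) = 1 - 1/2 := by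
          rw [hneg, measure_compl (hmeasf _ _) (measure_ne_top P _), hPone]
          simp
        have hv : tval s (Sum.inr q) = -1 := by simp [htval, hs, bsgn]
        rw [hv, hthis, ENNReal.toReal_sub_of_le (by norm_num) ENNReal.one_ne_top]
        norm_num
      · have hv : tval s (Sum.inr q) = 1 := by simp [htval, hs, bsgn]
        rw [hv, hPone]
        norm_num
    rw [h2, ENNReal.toReal_prod, Fintype.prod_sum_type]
    rw [Finset.prod_congr rfl (fun q (_ : q ∈ Finset.univ) => hBprob q),
      Finset.prod_congr rfl (fun q (_ : q ∈ Finset.univ) => heprob q)]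
    rw [Finset.prod_const]
    unfold wB wgt
    rw [Finset.card_univ]
  rw [Finset.sum_congr rfl (fun s (_ : s ∈ Finset.univ) => by rw [hpiece s, hPE s])]
  rw [Fintype.sum_prod_type]

end Fin



section Master

variable {ι : Type*} [Fintype ι] [DecidableEq ι] {T : Type*} [Nonempty T]

/-- coordinatewise swap of a pair of boolean vectors according to a mask. -/
def swapE (τ : ι → Bool) : ((ι → Bool) × (ι → Bool)) ≃ ((ι → Bool) × (ι → Bool)) :=
  Function.Involutive.toPerm (fun s => (fun q => if τ q then s.1 q else s.2 q,
                                        fun q => if τ q then s.2 q else s.1 q))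
    (fun s => by
      refine Prod.ext ?_ ?_ <;> funext q <;> by_cases hq : τ q <;> simp [hq])

/-- pointwise boolean negation as an equivalence. -/
def notE : (ι → Bool) ≃ (ι → Bool) :=
  Function.Involutive.toPerm (fun τ q => !(τ q)) (fun τ => by funext q; simp)

set_option maxHeartbeats 1000000 in
/-- The master finite inequality: Cauchy-Schwarz + centering + symmetrization + contraction. -/
lemma master (a δ p : ℝ) (ha : 0 < a) (hp0 : 0 ≤ p) (hp1 : p ≤ 1) (x : ι → T → ℝ)
    (hx : ∀ q t, |x q t| ≤ 2 * a) (hsq : ∀ t, ∑ q, (x q t) ^ 2 ≤ δ ^ 2) :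
    (∑ β : ι → Bool, (∏ q, wgt p (β q)) *
        ⨆ t, Real.sqrt (∑ q, bval (β q) * (x q t) ^ 2)) ^ 2 ≤
      p * δ ^ 2 + 8 * a * ∑ β : ι → Bool, ∑ τ : ι → Bool,
        ((∏ q, wgt p (β q)) * (1 / 2) ^ (Fintype.card ι)) *
          ⨆ t, ∑ q, bsgn (τ q) * (bval (β q) * x q t) := by
  set W : (ι → Bool) → ℝ := fun β => ∏ q, wgt p (β q) with hWdef
  set cM : ℝ := (1 / 2) ^ (Fintype.card ι) with hcM
  have hW0 : ∀ β, 0 ≤ W β := fun β => Finset.prod_nonneg (fun q _ => by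
    unfold wgt; split <;> linarith)
  have hWsum : ∑ β : ι → Bool, W β = 1 := sum_wgt_prod_eq_one
  have hcM0 : (0:ℝ) ≤ cM := by positivity
  have hcMsum : ∑ _τ : ι → Bool, cM = 1 := by
    rw [Finset.sum_const, Finset.card_univ, Fintype.card_fun, nsmul_eq_mul, hcM]
    rw [Nat.cast_pow, Fintype.card_bool, Nat.cast_ofNat, ← mul_pow]
    norm_num
  -- pointwise bounds and BddAbove facts
  have hptF : ∀ (F : ι → T → ℝ), (∀ q t, F q t ≤ (x q t) ^ 2) → ∀ t,
      (∑ q, F q t) ≤ δ ^ 2 := fun F hF t =>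
    le_trans (Finset.sum_le_sum (fun q _ => hF q t)) (hsq t)
  have hbddF : ∀ (F : ι → T → ℝ), (∀ q t, F q t ≤ (x q t) ^ 2) →
      BddAbove (Set.range fun t => ∑ q, F q t) := fun F hF =>
    bddAbove_range_of_bound (C := δ ^ 2) (hptF F hF)
  have hbddL : ∀ (F : ι → T → ℝ), (∀ q t, F q t ≤ 2 * a) →
      BddAbove (Set.range fun t => ∑ q, F q t) := fun F hF =>
    bddAbove_range_of_bound (C := (Fintype.card ι : ℝ) * (2 * a)) (fun t => by
      calc ∑ q, F q t ≤ ∑ _q : ι, 2 * a := Finset.sum_le_sum (fun q _ => hF q t)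
        _ = (Fintype.card ι : ℝ) * (2 * a) := by
            rw [Finset.sum_const, Finset.card_univ, nsmul_eq_mul])
  -- coefficient bounds
  have hcoef1 : ∀ (β : ι → Bool) q t, bval (β q) * (x q t) ^ 2 ≤ (x q t) ^ 2 :=
    fun β q t => mul_le_of_le_one_left (sq_nonneg _) (bval_le_one _)
  have hcoef2 : ∀ (β : ι → Bool) q t, (bval (β q) - p) * (x q t) ^ 2 ≤ (x q t) ^ 2 :=
    fun β q t => mul_le_of_le_one_left (sq_nonneg _) (by
      have := bval_le_one (β q); linarith)
  have hcoef3 : ∀ (β β' : ι → Bool) q t,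
      (bval (β q) - bval (β' q)) * (x q t) ^ 2 ≤ (x q t) ^ 2 :=
    fun β β' q t => mul_le_of_le_one_left (sq_nonneg _) (by
      have := bval_le_one (β q); have := bval_nonneg (β' q); linarith)
  have hcoef4 : ∀ (τ β β' : ι → Bool) q t,
      bsgn (τ q) * ((bval (β q) - bval (β' q)) * (x q t) ^ 2) ≤ (x q t) ^ 2 :=
    fun τ β β' q t => by
      have h1 : bsgn (τ q) * ((bval (β q) - bval (β' q)) * (x q t) ^ 2) ≤
          |bsgn (τ q)| * |(bval (β q) - bval (β' q)) * (x q t) ^ 2| := by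
        calc bsgn (τ q) * ((bval (β q) - bval (β' q)) * (x q t) ^ 2) ≤
            |bsgn (τ q) * ((bval (β q) - bval (β' q)) * (x q t) ^ 2)| := le_abs_self _
          _ = |bsgn (τ q)| * |(bval (β q) - bval (β' q)) * (x q t) ^ 2| := abs_mul _ _
      refine h1.trans ?_
      rw [bsgn_abs, one_mul, abs_mul, abs_sq]
      refine mul_le_of_le_one_left (sq_nonneg _) ?_
      rw [abs_le]
      constructor <;> [skip; skip] <;>
        (have := bval_le_one (β q); have := bval_nonneg (β q);
         have := bval_le_one (β' q); have := bval_nonneg (β' q); linarith)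
  have hcoef5 : ∀ (τ β : ι → Bool) q t,
      bsgn (τ q) * (bval (β q) * (x q t) ^ 2) ≤ (x q t) ^ 2 :=
    fun τ β q t => le_trans
      (mul_le_of_le_one_left (mul_nonneg (bval_nonneg _) (sq_nonneg _)) (bsgn_le_one _))
      (hcoef1 β q t)
  have hcoefL : ∀ (τ β : ι → Bool) q t, bsgn (τ q) * (bval (β q) * x q t) ≤ 2 * a :=
    fun τ β q t => by
      calc bsgn (τ q) * (bval (β q) * x q t) ≤ |bsgn (τ q) * (bval (β q) * x q t)| :=
            le_abs_self _
        _ = |bsgn (τ q)| * (|bval (β q)| * |x q t|) := by rw [abs_mul, abs_mul]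
        _ ≤ 1 * (1 * (2 * a)) := by
            refine mul_le_mul (le_of_eq (bsgn_abs _)) ?_ (by positivity) zero_le_one
            refine mul_le_mul ?_ (hx q t) (abs_nonneg _) zero_le_one
            rw [abs_of_nonneg (bval_nonneg _)]; exact bval_le_one _
        _ = 2 * a := by ring
  -- the sup families
  set Q : (ι → Bool) → ℝ := fun β => ⨆ t, ∑ q, bval (β q) * (x q t) ^ 2 with hQdef
  set R : (ι → Bool) → ℝ := fun β => ⨆ t, ∑ q, (bval (β q) - p) * (x q t) ^ 2 with hRdef
  set S : (ι → Bool) → (ι → Bool) → ℝ :=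
    fun β τ => ⨆ t, ∑ q, bsgn (τ q) * (bval (β q) * (x q t) ^ 2) with hSdef
  set Sl : (ι → Bool) → (ι → Bool) → ℝ :=
    fun β τ => ⨆ t, ∑ q, bsgn (τ q) * (bval (β q) * x q t) with hSldef
  set h : (ι → Bool) → ℝ := fun β => ⨆ t, Real.sqrt (∑ q, bval (β q) * (x q t) ^ 2)
    with hhdef
  -- step c1 : Cauchy-Schwarz
  have hQ0 : ∀ β, 0 ≤ Q β := by
    intro β
    refine le_trans ?_ (le_ciSup (hbddF _ (hcoef1 β)) (Classical.arbitrary T))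
    exact Finset.sum_nonneg (fun q _ => mul_nonneg (bval_nonneg _) (sq_nonneg _))
  have hh0 : ∀ β, 0 ≤ h β := by
    intro β
    have hb : BddAbove (Set.range fun t => Real.sqrt (∑ q, bval (β q) * (x q t) ^ 2)) :=
      bddAbove_range_of_bound (C := Real.sqrt (δ ^ 2)) (fun t =>
        Real.sqrt_le_sqrt (hptF _ (hcoef1 β) t))
    exact le_trans (Real.sqrt_nonneg _) (le_ciSup hb (Classical.arbitrary T))
  have hc1 : (∑ β : ι → Bool, W β * h β) ^ 2 ≤ ∑ β : ι → Bool, W β * (h β) ^ 2 := by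
    have hCS := Finset.sum_mul_sq_le_sq_mul_sq Finset.univ
      (fun β : ι → Bool => Real.sqrt (W β)) (fun β => Real.sqrt (W β) * h β)
    have e1 : ∀ β : ι → Bool, Real.sqrt (W β) * (Real.sqrt (W β) * h β) = W β * h β := by
      intro β
      rw [← mul_assoc, Real.mul_self_sqrt (hW0 β)]
    have e2 : ∀ β : ι → Bool, Real.sqrt (W β) ^ 2 = W β := fun β => Real.sq_sqrt (hW0 β)
    have e3 : ∀ β : ι → Bool, (Real.sqrt (W β) * h β) ^ 2 = W β * (h β) ^ 2 := by
      intro β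
      rw [mul_pow, e2]
    rw [Finset.sum_congr rfl (fun β _ => e1 β), Finset.sum_congr rfl (fun β _ => e2 β),
      Finset.sum_congr rfl (fun β _ => e3 β), hWsum, one_mul] at hCS
    exact hCS
  -- step c2 : h² ≤ Q
  have hc2 : ∀ β, (h β) ^ 2 ≤ Q β := by
    intro β
    have hle : h β ≤ Real.sqrt (Q β) :=
      ciSup_le (fun t => Real.sqrt_le_sqrt (le_ciSup (hbddF _ (hcoef1 β)) t))
    calc (h β) ^ 2 ≤ Real.sqrt (Q β) ^ 2 := by
          exact pow_le_pow_left₀ (hh0 β) hle 2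
      _ = Q β := Real.sq_sqrt (hQ0 β)
  -- step c3 : centering
  have hc3 : ∀ β, Q β ≤ p * δ ^ 2 + R β := by
    intro β
    refine ciSup_le (fun t => ?_)
    have e : ∑ q, bval (β q) * (x q t) ^ 2 =
        p * (∑ q, (x q t) ^ 2) + ∑ q, (bval (β q) - p) * (x q t) ^ 2 := by
      rw [Finset.mul_sum, ← Finset.sum_add_distrib]
      exact Finset.sum_congr rfl (fun q _ => by ring)
    rw [e]
    refine add_le_add (mul_le_mul_of_nonneg_left (hsq t) hp0)
      (le_ciSup (hbddF _ (hcoef2 β)) t)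
  -- step c4 : symmetrization via independent copy
  set Dd : (ι → Bool) → (ι → Bool) → ℝ :=
    fun β β' => ⨆ t, ∑ q, (bval (β q) - bval (β' q)) * (x q t) ^ 2 with hDdef
  have hmarg : ∀ q : ι, ∑ β' : ι → Bool, W β' * bval (β' q) = p := by
    intro q
    have h2 : ∑ β' : ι → Bool, W β' * bval (β' q) = p * bval true + (1 - p) * bval false :=
      sum_wgt_marg q bval
    rw [h2]
    simp [bval]
  have hc4 : ∀ β, R β ≤ ∑ β' : ι → Bool, W β' * Dd β β' := by
    intro β
    have hrep : ∀ t, ∑ q, (bval (β q) - p) * (x q t) ^ 2 =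
        ∑ β' : ι → Bool, W β' * (∑ q, (bval (β q) - bval (β' q)) * (x q t) ^ 2) := by
      intro t
      have e1 : ∀ β' : ι → Bool,
          W β' * (∑ q, (bval (β q) - bval (β' q)) * (x q t) ^ 2) =
          W β' * (∑ q, bval (β q) * (x q t) ^ 2) -
            ∑ q, (W β' * bval (β' q)) * (x q t) ^ 2 := by
        intro β'
        have e0 : (∑ q, (bval (β q) - bval (β' q)) * (x q t) ^ 2) =
            (∑ q, bval (β q) * (x q t) ^ 2) - ∑ q, bval (β' q) * (x q t) ^ 2 := by
          rw [← Finset.sum_sub_distrib]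
          exact Finset.sum_congr rfl (fun q _ => by ring)
        rw [e0, mul_sub]
        congr 1
        rw [Finset.mul_sum]
        exact Finset.sum_congr rfl (fun q _ => by ring)
      rw [Finset.sum_congr rfl (fun β' _ => e1 β'), Finset.sum_sub_distrib,
        ← Finset.sum_mul, hWsum, one_mul, Finset.sum_comm]
      have e2 : ∀ q : ι, ∑ β' : ι → Bool, (W β' * bval (β' q)) * (x q t) ^ 2 =
          p * (x q t) ^ 2 := by
        intro q
        rw [← Finset.sum_mul, hmarg q]
      rw [Finset.sum_congr rfl (fun q _ => e2 q), ← Finset.sum_sub_distrib]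
      exact Finset.sum_congr rfl (fun q _ => by ring)
    have hRrw : R β = ⨆ t, ∑ β' : ι → Bool,
        W β' * (∑ q, (bval (β q) - bval (β' q)) * (x q t) ^ 2) := by
      rw [hRdef]
      exact iSup_congr hrep
    rw [hRrw]
    exact ciSup_weighted_sum_le Finset.univ W _ hW0 (fun β' => hbddF _ (hcoef3 β β'))
  have hc5 : ∑ β : ι → Bool, W β * R β ≤
      ∑ β : ι → Bool, ∑ β' : ι → Bool, (W β * W β') * Dd β β' := by
    refine Finset.sum_le_sum (fun β _ => ?_)
    calc W β * R β ≤ W β * ∑ β' : ι → Bool, W β' * Dd β β' :=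
          mul_le_mul_of_nonneg_left (hc4 β) (hW0 β)
      _ = ∑ β' : ι → Bool, (W β * W β') * Dd β β' := by
          rw [Finset.mul_sum]
          exact Finset.sum_congr rfl (fun β' _ => by ring)
  -- step c6 : sign-flip invariance
  have hc6 : ∀ τ : ι → Bool,
      (∑ β : ι → Bool, ∑ β' : ι → Bool, (W β * W β') * Dd β β') =
      ∑ β : ι → Bool, ∑ β' : ι → Bool, (W β * W β') *
        ⨆ t, ∑ q, bsgn (τ q) * ((bval (β q) - bval (β' q)) * (x q t) ^ 2) := by
    intro τ
    have hkey : ∀ s : (ι → Bool) × (ι → Bool),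
        (W s.1 * W s.2) * Dd s.1 s.2 =
        (W ((swapE τ) s).1 * W ((swapE τ) s).2) *
          ⨆ t, ∑ q, bsgn (τ q) *
            ((bval (((swapE τ) s).1 q) - bval (((swapE τ) s).2 q)) * (x q t) ^ 2) := by
      intro s
      have hs1 : ∀ q, ((swapE τ) s).1 q = if τ q then s.1 q else s.2 q := fun q => rfl
      have hs2 : ∀ q, ((swapE τ) s).2 q = if τ q then s.2 q else s.1 q := fun q => rfl
      have hwgt : W ((swapE τ) s).1 * W ((swapE τ) s).2 = W s.1 * W s.2 := by
        rw [hWdef]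
        simp only
        rw [← Finset.prod_mul_distrib, ← Finset.prod_mul_distrib]
        refine Finset.prod_congr rfl (fun q _ => ?_)
        rw [hs1 q, hs2 q]
        by_cases hq : τ q
        · rw [if_pos hq, if_pos hq]
        · rw [if_neg hq, if_neg hq]; ring
      have hsup : Dd s.1 s.2 = ⨆ t, ∑ q, bsgn (τ q) *
          ((bval (((swapE τ) s).1 q) - bval (((swapE τ) s).2 q)) * (x q t) ^ 2) := by
        rw [hDdef]
        refine iSup_congr (fun t => Finset.sum_congr rfl (fun q _ => ?_))
        rw [hs1 q, hs2 q]
        by_cases hq : τ q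
        · rw [if_pos hq, if_pos hq, hq]
          simp [bsgn]
        · rw [if_neg hq, if_neg hq, show τ q = false from by simpa using hq]
          simp only [bsgn, Bool.false_eq_true, if_false]
          ring
      rw [hwgt, hsup]
    calc (∑ β : ι → Bool, ∑ β' : ι → Bool, (W β * W β') * Dd β β')
        = ∑ s : (ι → Bool) × (ι → Bool), (W s.1 * W s.2) * Dd s.1 s.2 :=
          (Fintype.sum_prod_type (fun s : (ι → Bool) × (ι → Bool) =>
            (W s.1 * W s.2) * Dd s.1 s.2)).symm
      _ = ∑ s : (ι → Bool) × (ι → Bool), (W s.1 * W s.2) *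
            ⨆ t, ∑ q, bsgn (τ q) * ((bval (s.1 q) - bval (s.2 q)) * (x q t) ^ 2) :=
          Fintype.sum_equiv (swapE τ)
            (fun s : (ι → Bool) × (ι → Bool) => (W s.1 * W s.2) * Dd s.1 s.2)
            (fun s : (ι → Bool) × (ι → Bool) => (W s.1 * W s.2) *
              ⨆ t, ∑ q, bsgn (τ q) * ((bval (s.1 q) - bval (s.2 q)) * (x q t) ^ 2))
            (fun s => hkey s)
      _ = _ := Fintype.sum_prod_type (fun s : (ι → Bool) × (ι → Bool) =>
            (W s.1 * W s.2) *
              ⨆ t, ∑ q, bsgn (τ q) * ((bval (s.1 q) - bval (s.2 q)) * (x q t) ^ 2))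
  -- step c7 : splitting
  have hc7 : ∀ (τ β β' : ι → Bool),
      (⨆ t, ∑ q, bsgn (τ q) * ((bval (β q) - bval (β' q)) * (x q t) ^ 2)) ≤
        S β τ + S β' (fun q => !(τ q)) := by
    intro τ β β'
    refine ciSup_le (fun t => ?_)
    have e : ∑ q, bsgn (τ q) * ((bval (β q) - bval (β' q)) * (x q t) ^ 2) =
        (∑ q, bsgn (τ q) * (bval (β q) * (x q t) ^ 2)) +
          ∑ q, bsgn (!(τ q)) * (bval (β' q) * (x q t) ^ 2) := by
      rw [← Finset.sum_add_distrib]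
      refine Finset.sum_congr rfl (fun q _ => ?_)
      rw [bsgn_not]
      ring
    rw [e]
    exact add_le_add (le_ciSup (hbddF _ (hcoef5 τ β)) t)
      (le_ciSup (hbddF _ (hcoef5 (fun q => !(τ q)) β')) t)
  -- step c8 : putting symmetrization together
  have hc8 : ∑ β : ι → Bool, W β * R β ≤
      2 * ∑ β : ι → Bool, ∑ τ : ι → Bool, (W β * cM) * S β τ := by
    have hA2 : ∀ τ : ι → Bool,
        cM * (∑ β : ι → Bool, ∑ β' : ι → Bool, (W β * W β') * Dd β β') ≤
        cM * ((∑ β : ι → Bool, W β * S β τ) +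
          ∑ β' : ι → Bool, W β' * S β' (fun q => !(τ q))) := by
      intro τ
      refine mul_le_mul_of_nonneg_left ?_ hcM0
      rw [hc6 τ]
      have hsplit : ∀ β β' : ι → Bool, (W β * W β') *
          (⨆ t, ∑ q, bsgn (τ q) * ((bval (β q) - bval (β' q)) * (x q t) ^ 2)) ≤
          (W β * W β') * (S β τ + S β' (fun q => !(τ q))) :=
        fun β β' => mul_le_mul_of_nonneg_left (hc7 τ β β')
          (mul_nonneg (hW0 β) (hW0 β'))
      have e1 : ∀ β : ι → Bool,
          (∑ β' : ι → Bool, (W β * W β') * (S β τ + S β' (fun q => !(τ q)))) =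
          W β * S β τ + W β * ∑ β' : ι → Bool, W β' * S β' (fun q => !(τ q)) := by
        intro β
        rw [show (∑ β' : ι → Bool, (W β * W β') * (S β τ + S β' (fun q => !(τ q)))) =
            (∑ β' : ι → Bool, ((W β * S β τ) * W β' +
              W β * (W β' * S β' (fun q => !(τ q))))) from
          Finset.sum_congr rfl (fun β' _ => by ring)]
        rw [Finset.sum_add_distrib, ← Finset.mul_sum, hWsum, mul_one, ← Finset.mul_sum]
      calc ∑ β : ι → Bool, ∑ β' : ι → Bool, (W β * W β') *
            (⨆ t, ∑ q, bsgn (τ q) * ((bval (β q) - bval (β' q)) * (x q t) ^ 2))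
          ≤ ∑ β : ι → Bool, ∑ β' : ι → Bool,
              (W β * W β') * (S β τ + S β' (fun q => !(τ q))) :=
            Finset.sum_le_sum (fun β _ => Finset.sum_le_sum (fun β' _ => hsplit β β'))
        _ = (∑ β : ι → Bool, W β * S β τ) +
              ∑ β' : ι → Bool, W β' * S β' (fun q => !(τ q)) := by
            rw [Finset.sum_congr rfl (fun β _ => e1 β), Finset.sum_add_distrib,
              ← Finset.sum_mul, hWsum, one_mul]
    -- the τ-average of the second term equals that of the first
    have hnegsum : ∑ τ : ι → Bool, cM * ∑ β' : ι → Bool, W β' * S β' (fun q => !(τ q)) =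
        ∑ τ : ι → Bool, cM * ∑ β : ι → Bool, W β * S β τ := by
      refine Fintype.sum_equiv (notE (ι := ι)) _ _ (fun τ => ?_)
      rfl
    calc ∑ β : ι → Bool, W β * R β
        ≤ ∑ β : ι → Bool, ∑ β' : ι → Bool, (W β * W β') * Dd β β' := hc5
      _ = ∑ τ : ι → Bool, cM *
            (∑ β : ι → Bool, ∑ β' : ι → Bool, (W β * W β') * Dd β β') := by
          rw [← Finset.sum_mul, hcMsum, one_mul]
      _ ≤ ∑ τ : ι → Bool, cM * ((∑ β : ι → Bool, W β * S β τ) +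
            ∑ β' : ι → Bool, W β' * S β' (fun q => !(τ q))) :=
          Finset.sum_le_sum (fun τ _ => hA2 τ)
      _ = (∑ τ : ι → Bool, cM * ∑ β : ι → Bool, W β * S β τ) +
            ∑ τ : ι → Bool, cM * ∑ β' : ι → Bool, W β' * S β' (fun q => !(τ q)) := by
          rw [← Finset.sum_add_distrib]
          exact Finset.sum_congr rfl (fun τ _ => by ring)
      _ = 2 * ∑ τ : ι → Bool, cM * ∑ β : ι → Bool, W β * S β τ := by
          rw [hnegsum]; ring
      _ = 2 * ∑ β : ι → Bool, ∑ τ : ι → Bool, (W β * cM) * S β τ := by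
          congr 1
          rw [Finset.sum_comm]
          refine Finset.sum_congr rfl (fun β _ => ?_)
          rw [Finset.mul_sum]
          exact Finset.sum_congr rfl (fun τ _ => by ring)
  -- step c9 : contraction
  have hc9 : ∀ β : ι → Bool, ∑ τ : ι → Bool, S β τ ≤
      (4 * a) * ∑ τ : ι → Bool, Sl β τ := by
    intro β
    have hu : ∀ (q : ι) (t : T), |(4 * a) * (bval (β q) * x q t)| ≤ 4 * a * (2 * a) := by
      intro q t
      rw [abs_mul, abs_of_nonneg (by positivity : (0:ℝ) ≤ 4 * a), abs_mul,
        abs_of_nonneg (bval_nonneg _)]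
      refine mul_le_mul_of_nonneg_left ?_ (by positivity)
      calc bval (β q) * |x q t| ≤ 1 * (2 * a) :=
            mul_le_mul (bval_le_one _) (hx q t) (abs_nonneg _) zero_le_one
        _ = 2 * a := one_mul _
    have hv : ∀ (q : ι) (t : T), |bval (β q) * (x q t) ^ 2| ≤ (2 * a) ^ 2 := by
      intro q t
      rw [abs_mul, abs_of_nonneg (bval_nonneg _), abs_sq]
      calc bval (β q) * (x q t) ^ 2 ≤ 1 * (2 * a) ^ 2 := by
            refine mul_le_mul (bval_le_one _) ?_ (sq_nonneg _) zero_le_one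
            calc (x q t) ^ 2 = |x q t| ^ 2 := (sq_abs _).symm
              _ ≤ (2 * a) ^ 2 := pow_le_pow_left₀ (abs_nonneg _) (hx q t) 2
        _ = (2 * a) ^ 2 := one_mul _
    have hlip : ∀ (q : ι) (t s : T),
        |bval (β q) * (x q t) ^ 2 - bval (β q) * (x q s) ^ 2| ≤
        |(4 * a) * (bval (β q) * x q t) - (4 * a) * (bval (β q) * x q s)| := by
      intro q t s
      have e1 : bval (β q) * (x q t) ^ 2 - bval (β q) * (x q s) ^ 2 =
          bval (β q) * ((x q t) ^ 2 - (x q s) ^ 2) := by ring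
      have e2 : (4 * a) * (bval (β q) * x q t) - (4 * a) * (bval (β q) * x q s) =
          bval (β q) * ((4 * a) * (x q t - x q s)) := by ring
      rw [e1, e2, abs_mul, abs_mul]
      refine mul_le_mul_of_nonneg_left ?_ (abs_nonneg _)
      have e3 : (x q t) ^ 2 - (x q s) ^ 2 = (x q t + x q s) * (x q t - x q s) := by ring
      rw [e3, abs_mul, abs_mul, abs_of_nonneg (by positivity : (0:ℝ) ≤ 4 * a)]
      refine mul_le_mul_of_nonneg_right ?_ (abs_nonneg _)
      calc |x q t + x q s| ≤ |x q t| + |x q s| := abs_add_le _ _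
        _ ≤ 2 * a + 2 * a := add_le_add (hx q t) (hx q s)
        _ = 4 * a := by ring
    have hcontr := contraction_avg (T := T)
      (u := fun q t => (4 * a) * (bval (β q) * x q t))
      (v := fun q t => bval (β q) * (x q t) ^ 2) hu hv hlip
    have hrhs : ∀ τ : ι → Bool,
        (⨆ t, ∑ q, bsgn (τ q) * ((4 * a) * (bval (β q) * x q t))) =
        (4 * a) * Sl β τ := by
      intro τ
      have e : ∀ t, ∑ q, bsgn (τ q) * ((4 * a) * (bval (β q) * x q t)) =
          (4 * a) * ∑ q, bsgn (τ q) * (bval (β q) * x q t) := by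
        intro t
        rw [Finset.mul_sum]
        exact Finset.sum_congr rfl (fun q _ => by ring)
      rw [iSup_congr e]
      exact ciSup_const_mul (by positivity) _ (hbddL _ (hcoefL τ β))
    calc ∑ τ : ι → Bool, S β τ
        ≤ ∑ τ : ι → Bool, ⨆ t, ∑ q, bsgn (τ q) * ((4 * a) * (bval (β q) * x q t)) :=
          hcontr
      _ = ∑ τ : ι → Bool, (4 * a) * Sl β τ :=
          Finset.sum_congr rfl (fun τ _ => hrhs τ)
      _ = (4 * a) * ∑ τ : ι → Bool, Sl β τ := by rw [Finset.mul_sum]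
  -- final assembly
  have hfin1 : ∑ β : ι → Bool, W β * (h β) ^ 2 ≤ p * δ ^ 2 + ∑ β : ι → Bool, W β * R β := by
    calc ∑ β : ι → Bool, W β * (h β) ^ 2
        ≤ ∑ β : ι → Bool, W β * (p * δ ^ 2 + R β) :=
          Finset.sum_le_sum (fun β _ => mul_le_mul_of_nonneg_left
            ((hc2 β).trans (hc3 β)) (hW0 β))
      _ = p * δ ^ 2 + ∑ β : ι → Bool, W β * R β := by
          rw [show (∑ β : ι → Bool, W β * (p * δ ^ 2 + R β)) =
              (∑ β : ι → Bool, (W β * (p * δ ^ 2) + W β * R β)) from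
            Finset.sum_congr rfl (fun β _ => by ring)]
          rw [Finset.sum_add_distrib, ← Finset.sum_mul, hWsum, one_mul]
  have hfin2 : ∑ β : ι → Bool, ∑ τ : ι → Bool, (W β * cM) * S β τ ≤
      (4 * a) * ∑ β : ι → Bool, ∑ τ : ι → Bool, (W β * cM) * Sl β τ := by
    rw [Finset.mul_sum]
    refine Finset.sum_le_sum (fun β _ => ?_)
    have e : ∀ (Z : (ι → Bool) → (ι → Bool) → ℝ),
        ∑ τ : ι → Bool, (W β * cM) * Z β τ = (W β * cM) * ∑ τ : ι → Bool, Z β τ :=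
      fun Z => by rw [Finset.mul_sum]
    rw [e S, e Sl]
    calc (W β * cM) * ∑ τ : ι → Bool, S β τ
        ≤ (W β * cM) * ((4 * a) * ∑ τ : ι → Bool, Sl β τ) :=
          mul_le_mul_of_nonneg_left (hc9 β) (mul_nonneg (hW0 β) hcM0)
      _ = 4 * a * ((W β * cM) * ∑ τ : ι → Bool, Sl β τ) := by ring
  calc (∑ β : ι → Bool, W β * h β) ^ 2
      ≤ ∑ β : ι → Bool, W β * (h β) ^ 2 := hc1
    _ ≤ p * δ ^ 2 + ∑ β : ι → Bool, W β * R β := hfin1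
    _ ≤ p * δ ^ 2 + 2 * ∑ β : ι → Bool, ∑ τ : ι → Bool, (W β * cM) * S β τ := by
        linarith [hc8]
    _ ≤ p * δ ^ 2 + 2 * ((4 * a) * ∑ β : ι → Bool, ∑ τ : ι → Bool,
          (W β * cM) * Sl β τ) := by
        linarith [hfin2]
    _ = p * δ ^ 2 + 8 * a * ∑ β : ι → Bool, ∑ τ : ι → Bool, (W β * cM) * Sl β τ := by
        ring

end Master

/-- Symmetrization/contraction bound for the expected supremum: with
X_T = sup_{Δ ∈ 𝒟_δ(2k,2a,2T)} ‖𝒳(Δ)‖₂ one has (E X_T)² ≤ 16a√(2k)·T·E‖Σ_R‖ + pδ²,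
where Σ_R = (B_ij ε'_ij)_ij for an i.i.d. Rademacher sequence ε' independent of B. -/
theorem symmetrization_contraction_bound (m1 m2 n k : ℕ) (a p T δ : ℝ)
    (Ω : Type) [MeasurableSpace Ω] (P : Measure Ω) [IsProbabilityMeasure P]
    (B eR : Ω → Matrix (Fin m1) (Fin m2) ℝ)
    (hm1 : 0 < m1) (hm2 : 0 < m2) (hn : 0 < n) (hnle : n ≤ m1 * m2)
    (hp : p = (n : ℝ) / (m1 * m2)) (ha : 0 < a) (hT : 0 < T) (hδ : 0 < δ) (hk : 1 ≤ k)
    (hB : IsBernoulliMatrix P B p) (heR : IsRademacherMatrix P eR)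
    (hBeR : JointlyIndep P B eR) :
    (∫ ω, (⨆ Δ : classD (2 * k) (2 * a) δ (2 * T) (m1 := m1) (m2 := m2),
        frob (hadB (B ω) Δ.1)) ∂P) ^ 2 ≤
      16 * a * Real.sqrt (2 * k) * T *
          (∫ ω, opNorm (Matrix.of fun i j => B ω i j * eR ω i j) ∂P) +
        p * δ ^ 2 := by
  classical
  have hm12 : (0:ℝ) < (m1:ℝ) * (m2:ℝ) := by
    have h1 : (0:ℝ) < (m1:ℝ) := by exact_mod_cast hm1
    have h2 : (0:ℝ) < (m2:ℝ) := by exact_mod_cast hm2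
    positivity
  have hp0 : 0 ≤ p := by
    rw [hp]
    positivity
  have hp1 : p ≤ 1 := by
    rw [hp, div_le_one (by push_cast; exact hm12)]
    exact_mod_cast hnle
  -- nonemptiness of the class
  have hD0 : (0 : Matrix (Fin m1) (Fin m2) ℝ) ∈
      classD (2 * k) (2 * a) δ (2 * T) := by
    refine ⟨fun i j => ?_, ?_, ?_⟩
    · simp only [Matrix.zero_apply, abs_zero]
      linarith
    · rw [frob_zero]
      linarith
    · rw [nucNorm_zero]
      positivity
  haveI hTne : Nonempty (classD (2 * k) (2 * a) δ (2 * T) :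
      Set (Matrix (Fin m1) (Fin m2) ℝ)) := ⟨⟨0, hD0⟩⟩
  -- entry bounds for members of the class
  have hx : ∀ (q : Fin m1 × Fin m2)
      (Δ : classD (2 * k) (2 * a) δ (2 * T) (m1 := m1) (m2 := m2)),
      |Δ.1 q.1 q.2| ≤ 2 * a := fun q Δ => Δ.2.1 q.1 q.2
  have hsq : ∀ Δ : classD (2 * k) (2 * a) δ (2 * T) (m1 := m1) (m2 := m2),
      ∑ q : Fin m1 × Fin m2, (Δ.1 q.1 q.2) ^ 2 ≤ δ ^ 2 := by
    intro Δ
    have h1 : ∑ q : Fin m1 × Fin m2, (Δ.1 q.1 q.2) ^ 2 = frob2 Δ.1 := by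
      rw [Fintype.sum_prod_type]
      rfl
    rw [h1, ← frob_sq Δ.1]
    exact pow_le_pow_left₀ (frob_nonneg _) Δ.2.2.1 2
  have hwgt0 : ∀ β : Fin m1 × Fin m2 → Bool, 0 ≤ ∏ q, wgt p (β q) :=
    fun β => Finset.prod_nonneg (fun q _ => by unfold wgt; split <;> linarith)
  have hcM0 : (0:ℝ) ≤ (1 / 2) ^ (Fintype.card (Fin m1 × Fin m2)) := by positivity
  have hcMsum : ∑ _τ : Fin m1 × Fin m2 → Bool,
      ((1:ℝ) / 2) ^ (Fintype.card (Fin m1 × Fin m2)) = 1 := by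
    rw [Finset.sum_const, Finset.card_univ, Fintype.card_fun, nsmul_eq_mul,
      Nat.cast_pow, Fintype.card_bool, Nat.cast_ofNat, ← mul_pow]
    norm_num
  -- Step A : reduce the LHS integral to a finite sum
  have hEQ1 : (∫ ω, (⨆ Δ : classD (2 * k) (2 * a) δ (2 * T) (m1 := m1) (m2 := m2),
      frob (hadB (B ω) Δ.1)) ∂P) =
      ∑ β : Fin m1 × Fin m2 → Bool, ∑ τ : Fin m1 × Fin m2 → Bool,
        (wB p β * (1 / 2) ^ (Fintype.card (Fin m1 × Fin m2))) *
          (⨆ Δ : classD (2 * k) (2 * a) δ (2 * T) (m1 := m1) (m2 := m2),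
            frob (hadB (bmat β) Δ.1)) :=
    fin_reduction hB heR hBeR hp0 hp1
      (fun b _ => ⨆ Δ : classD (2 * k) (2 * a) δ (2 * T) (m1 := m1) (m2 := m2),
        frob (hadB b Δ.1))
  -- Step B : collapse the τ-sum and rewrite the suprema
  have hfrobeq : ∀ (β : Fin m1 × Fin m2 → Bool)
      (Δ : classD (2 * k) (2 * a) δ (2 * T) (m1 := m1) (m2 := m2)),
      frob (hadB (bmat β) Δ.1) =
        Real.sqrt (∑ q : Fin m1 × Fin m2, bval (β q) * (Δ.1 q.1 q.2) ^ 2) := by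
    intro β Δ
    unfold frob
    congr 1
    unfold frob2 hadB
    rw [Fintype.sum_prod_type]
    refine Finset.sum_congr rfl (fun i _ => Finset.sum_congr rfl (fun j _ => ?_))
    show (bmat β i j * Δ.1 i j) ^ 2 = bval (β (i, j)) * (Δ.1 i j) ^ 2
    have h1 : bmat β i j = bval (β (i, j)) := rfl
    rw [h1]
    cases hb : β (i, j) <;> simp [bval] <;> ring
  have hEQ2 : (∑ β : Fin m1 × Fin m2 → Bool, ∑ τ : Fin m1 × Fin m2 → Bool,
      (wB p β * (1 / 2) ^ (Fintype.card (Fin m1 × Fin m2))) *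
        (⨆ Δ : classD (2 * k) (2 * a) δ (2 * T) (m1 := m1) (m2 := m2),
          frob (hadB (bmat β) Δ.1))) =
      ∑ β : Fin m1 × Fin m2 → Bool, (∏ q, wgt p (β q)) *
        ⨆ Δ : classD (2 * k) (2 * a) δ (2 * T) (m1 := m1) (m2 := m2),
          Real.sqrt (∑ q : Fin m1 × Fin m2, bval (β q) * (Δ.1 q.1 q.2) ^ 2) := by
    refine Finset.sum_congr rfl (fun β _ => ?_)
    have hs : (⨆ Δ : classD (2 * k) (2 * a) δ (2 * T) (m1 := m1) (m2 := m2),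
        frob (hadB (bmat β) Δ.1)) =
        ⨆ Δ : classD (2 * k) (2 * a) δ (2 * T) (m1 := m1) (m2 := m2),
          Real.sqrt (∑ q : Fin m1 × Fin m2, bval (β q) * (Δ.1 q.1 q.2) ^ 2) :=
      iSup_congr (fun Δ => hfrobeq β Δ)
    calc ∑ τ : Fin m1 × Fin m2 → Bool,
          (wB p β * (1 / 2) ^ (Fintype.card (Fin m1 × Fin m2))) *
            (⨆ Δ : classD (2 * k) (2 * a) δ (2 * T) (m1 := m1) (m2 := m2),
              frob (hadB (bmat β) Δ.1))
        = ∑ τ : Fin m1 × Fin m2 → Bool,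
            ((1:ℝ) / 2) ^ (Fintype.card (Fin m1 × Fin m2)) *
            (wB p β * ⨆ Δ : classD (2 * k) (2 * a) δ (2 * T) (m1 := m1) (m2 := m2),
              frob (hadB (bmat β) Δ.1)) :=
          Finset.sum_congr rfl (fun τ _ => by ring)
      _ = (∑ _τ : Fin m1 × Fin m2 → Bool,
            ((1:ℝ) / 2) ^ (Fintype.card (Fin m1 × Fin m2))) *
            (wB p β * ⨆ Δ : classD (2 * k) (2 * a) δ (2 * T) (m1 := m1) (m2 := m2),
              frob (hadB (bmat β) Δ.1)) := by
          rw [Finset.sum_mul]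
      _ = (∏ q, wgt p (β q)) *
            ⨆ Δ : classD (2 * k) (2 * a) δ (2 * T) (m1 := m1) (m2 := m2),
              Real.sqrt (∑ q : Fin m1 × Fin m2, bval (β q) * (Δ.1 q.1 q.2) ^ 2) := by
          rw [hcMsum, one_mul, hs]
          rfl
  -- Step C : the master inequality
  have hmaster := master (ι := Fin m1 × Fin m2)
    (T := (classD (2 * k) (2 * a) δ (2 * T) : Set (Matrix (Fin m1) (Fin m2) ℝ)))
    a δ p ha hp0 hp1 (fun q Δ => Δ.1 q.1 q.2) hx hsq
  -- Step D : duality bound for the Rademacher suprema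
  have hdual : ∀ (β τ : Fin m1 × Fin m2 → Bool),
      (⨆ Δ : classD (2 * k) (2 * a) δ (2 * T) (m1 := m1) (m2 := m2),
        ∑ q : Fin m1 × Fin m2, bsgn (τ q) * (bval (β q) * Δ.1 q.1 q.2)) ≤
      opNorm (Matrix.of fun i j => bmat β i j * emat τ i j) *
        (Real.sqrt (↑(2 * k)) * (2 * T)) := by
    intro β τ
    refine ciSup_le (fun Δ => ?_)
    have e : ∑ q : Fin m1 × Fin m2, bsgn (τ q) * (bval (β q) * Δ.1 q.1 q.2) =
        mdot (Matrix.of fun i j => bmat β i j * emat τ i j) Δ.1 := by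
      unfold mdot
      rw [Fintype.sum_prod_type]
      refine Finset.sum_congr rfl (fun i _ => Finset.sum_congr rfl (fun j _ => ?_))
      show bsgn (τ (i, j)) * (bval (β (i, j)) * Δ.1 i j) =
        (Matrix.of fun i j => bmat β i j * emat τ i j) i j * Δ.1 i j
      have h1 : (Matrix.of fun i j => bmat β i j * emat τ i j) i j =
          bval (β (i, j)) * bsgn (τ (i, j)) := rfl
      rw [h1]
      ring
    rw [e]
    calc mdot (Matrix.of fun i j => bmat β i j * emat τ i j) Δ.1
        ≤ opNorm (Matrix.of fun i j => bmat β i j * emat τ i j) * nucNorm Δ.1 :=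
          mdot_le_opNorm_mul_nucNorm _ _
      _ ≤ opNorm (Matrix.of fun i j => bmat β i j * emat τ i j) *
            (Real.sqrt (↑(2 * k)) * (2 * T)) :=
          mul_le_mul_of_nonneg_left Δ.2.2.2 (opNorm_nonneg _)
  -- Step E : reduce the RHS integral
  have hEQ4 : (∫ ω, opNorm (Matrix.of fun i j => B ω i j * eR ω i j) ∂P) =
      ∑ β : Fin m1 × Fin m2 → Bool, ∑ τ : Fin m1 × Fin m2 → Bool,
        (wB p β * (1 / 2) ^ (Fintype.card (Fin m1 × Fin m2))) *
          opNorm (Matrix.of fun i j => bmat β i j * emat τ i j) :=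
    fin_reduction hB heR hBeR hp0 hp1
      (fun b e => opNorm (Matrix.of fun i j => b i j * e i j))
  -- Step F : final assembly
  have hcast : Real.sqrt (↑(2 * k)) = Real.sqrt (2 * (k:ℝ)) := by
    congr 1
    push_cast
    ring
  have hwB : ∀ β : Fin m1 × Fin m2 → Bool, wB p β = ∏ q, wgt p (β q) := fun β => rfl
  calc (∫ ω, (⨆ Δ : classD (2 * k) (2 * a) δ (2 * T) (m1 := m1) (m2 := m2),
        frob (hadB (B ω) Δ.1)) ∂P) ^ 2
      = (∑ β : Fin m1 × Fin m2 → Bool, (∏ q, wgt p (β q)) *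
          ⨆ Δ : classD (2 * k) (2 * a) δ (2 * T) (m1 := m1) (m2 := m2),
            Real.sqrt (∑ q : Fin m1 × Fin m2, bval (β q) * (Δ.1 q.1 q.2) ^ 2)) ^ 2 := by
        rw [hEQ1, hEQ2]
    _ ≤ p * δ ^ 2 + 8 * a * ∑ β : Fin m1 × Fin m2 → Bool, ∑ τ : Fin m1 × Fin m2 → Bool,
          ((∏ q, wgt p (β q)) * (1 / 2) ^ (Fintype.card (Fin m1 × Fin m2))) *
            ⨆ Δ : classD (2 * k) (2 * a) δ (2 * T) (m1 := m1) (m2 := m2),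
              ∑ q : Fin m1 × Fin m2, bsgn (τ q) * (bval (β q) * Δ.1 q.1 q.2) := hmaster
    _ ≤ p * δ ^ 2 + 8 * a * ∑ β : Fin m1 × Fin m2 → Bool, ∑ τ : Fin m1 × Fin m2 → Bool,
          ((∏ q, wgt p (β q)) * (1 / 2) ^ (Fintype.card (Fin m1 × Fin m2))) *
            (opNorm (Matrix.of fun i j => bmat β i j * emat τ i j) *
              (Real.sqrt (↑(2 * k)) * (2 * T))) := by
        have h8 : (0:ℝ) ≤ 8 * a := by linarith
        refine add_le_add_right (mul_le_mul_of_nonneg_left ?_ h8) _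
        refine Finset.sum_le_sum (fun β _ => Finset.sum_le_sum (fun τ _ => ?_))
        exact mul_le_mul_of_nonneg_left (hdual β τ) (mul_nonneg (hwgt0 β) hcM0)
    _ = p * δ ^ 2 + (8 * a * (Real.sqrt (↑(2 * k)) * (2 * T))) *
          ∑ β : Fin m1 × Fin m2 → Bool, ∑ τ : Fin m1 × Fin m2 → Bool,
            ((∏ q, wgt p (β q)) * (1 / 2) ^ (Fintype.card (Fin m1 × Fin m2))) *
              opNorm (Matrix.of fun i j => bmat β i j * emat τ i j) := by
        congr 1
        rw [Finset.mul_sum, Finset.mul_sum]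
        refine Finset.sum_congr rfl (fun β _ => ?_)
        rw [Finset.mul_sum, Finset.mul_sum]
        refine Finset.sum_congr rfl (fun τ _ => ?_)
        ring
    _ = 16 * a * Real.sqrt (2 * ↑k) * T *
          (∫ ω, opNorm (Matrix.of fun i j => B ω i j * eR ω i j) ∂P) + p * δ ^ 2 := by
        simp only [wB] at hEQ4
        rw [hEQ4, hcast]
        ring
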